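/- Let H = {z} ∪ {(x, k, y) : x, y ∈ Y ∪ Z, and there exist α, β ∈ Y and a path γ with x = αγ, y = βγ and k = l(α) − l(β)}, where z is an extra point. For α, β ∈ Y with r(α) = r(β), let A_{α,β} = {(αγ, l(α) − l(β), βγ) : γ a path, possibly of length 0, with s(γ) = r(α)} ⊆ H. Then H, equipped with the topology generated by the singleton {z}, the sets A_{α,β}, and their complements, is a Hausdorff topological space. -/

import Mathlib

namespace GraphCstar

/-- A directed graph: vertices, edges, source and range maps. -/
structure Graph where
  V : Type
  Ed : Type
  src : Ed → V
  rng : Ed → V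

variable (G : Graph)

/-- Validity of a list of edges as a path starting at vertex `v`. -/
def Valid : G.V → List G.Ed → Prop
  | _, [] => True
  | v, e :: l => G.src e = v ∧ Valid (G.rng e) l

/-- Terminal vertex of a list of edges starting at `v`. -/
def rngTo : G.V → List G.Ed → G.V
  | v, [] => v
  | _, e :: l => rngTo (G.rng e) l

theorem valid_append (l₁ l₂ : List G.Ed) (v : G.V) :
    Valid G v (l₁ ++ l₂) ↔ Valid G v l₁ ∧ Valid G (rngTo G v l₁) l₂ := by
  induction l₁ generalizing v with
  | nil => simp [Valid, rngTo]
  | cons e l ih => simp [Valid, rngTo, ih, and_assoc]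

theorem rngTo_append (l₁ l₂ : List G.Ed) (v : G.V) :
    rngTo G v (l₁ ++ l₂) = rngTo G (rngTo G v l₁) l₂ := by
  induction l₁ generalizing v with
  | nil => rfl
  | cons e l ih => simp [rngTo, ih]

theorem valid_drop {v : G.V} {l : List G.Ed} (n : ℕ) (h : Valid G v l) :
    Valid G (rngTo G v (l.take n)) (l.drop n) := by
  have h' : Valid G v (l.take n ++ l.drop n) := by
    rw [List.take_append_drop]; exact h
  exact ((valid_append G _ _ _).mp h').2

/-- A finite path in the graph `G`; vertices are the paths of length `0`. -/
structure FinPath where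
  start : G.V
  edges : List G.Ed
  valid : Valid G start edges

namespace FinPath

variable {G}

/-- The terminal vertex (range) of a finite path. -/
def rngF (α : FinPath G) : G.V := rngTo G α.start α.edges

/-- The length of a finite path. -/
def len (α : FinPath G) : ℕ := α.edges.length

/-- The finite path of length `0` at the vertex `v`. -/
def vp (v : G.V) : FinPath G := ⟨v, [], trivial⟩

/-- The finite path consisting of the single edge `e`. -/
def ep (e : G.Ed) : FinPath G := ⟨G.src e, [e], ⟨rfl, trivial⟩⟩

/-- Concatenation of finite paths. -/
def concat (α β : FinPath G) (h : β.start = α.rngF) : FinPath G :=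
  ⟨α.start, α.edges ++ β.edges,
    (valid_append G _ _ _).mpr
      ⟨α.valid, by
        show Valid G α.rngF β.edges
        rw [← h]; exact β.valid⟩⟩

theorem rngF_concat (α β : FinPath G) (h : β.start = α.rngF) :
    (α.concat β h).rngF = β.rngF := by
  show rngTo G α.start (α.edges ++ β.edges) = _
  rw [rngTo_append]
  show rngTo G α.rngF β.edges = _
  rw [← h]; rfl

end FinPath

/-- `α` is an initial segment of `β`. -/
def IsPref (α β : FinPath G) : Prop := α.start = β.start ∧ α.edges <+: β.edges

/-- The "remainder" path: if `α` is an initial segment of `β`, the path `μ` with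
`β = αμ` (for other inputs the value is junk). -/
def diff (α β : FinPath G) : FinPath G :=
  ⟨rngTo G β.start (β.edges.take α.edges.length),
    β.edges.drop α.edges.length, valid_drop G _ β.valid⟩

open Classical in
/-- Totalized concatenation of finite paths (junk value when endpoints do not match). -/
noncomputable def catP (α β : FinPath G) : FinPath G :=
  if h : β.start = α.rngF then α.concat β h else α

open Classical in
/-- The product on `T = {(α,β) ∈ Y × Y : r(α) = r(β)} ∪ {z}`, with `z` encoded as `none`. -/
noncomputable def mulT :
    Option (FinPath G × FinPath G) → Option (FinPath G × FinPath G) →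
      Option (FinPath G × FinPath G)
  | none, _ => none
  | _, none => none
  | some (α₁, β₁), some (α₂, β₂) =>
    if IsPref G β₁ α₂ then some (catP G α₁ (diff G β₁ α₂), β₂)
    else if IsPref G α₂ β₁ then some (α₁, catP G β₂ (diff G α₂ β₁))
    else none

/-- The involution on `T`. -/
def starT :
    Option (FinPath G × FinPath G) → Option (FinPath G × FinPath G)
  | none => none
  | some (α, β) => some (β, α)

/-- The subset of `Option (FinPath G × FinPath G)` corresponding to
`T = {(α,β) : r(α) = r(β)} ∪ {z}`. -/
def TsetT : Set (Option (FinPath G × FinPath G)) :=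
  {t | ∀ α β : FinPath G, t = some (α, β) → α.rngF = β.rngF}

/-- An infinite path in the graph `G`. -/
structure InfPath where
  seq : ℕ → G.Ed
  valid : ∀ i, G.src (seq (i + 1)) = G.rng (seq i)

/-- The initial vertex of an infinite path. -/
def InfPath.start {G : Graph} (z : InfPath G) : G.V := G.src (z.seq 0)

/-- Prepending an edge to an infinite path. -/
def consInf (e : G.Ed) (z : InfPath G) (h : z.start = G.rng e) : InfPath G where
  seq := fun n =>
    match n with
    | 0 => e
    | m + 1 => z.seq m
  valid := fun i =>
    match i with
    | 0 => h
    | m + 1 => z.valid m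

/-- Prepending a finite edge list to an infinite path (with the starting vertex recorded). -/
def appendInfAux :
    (l : List G.Ed) → (v : G.V) → Valid G v l → (z : InfPath G) →
      z.start = rngTo G v l → {w : InfPath G // w.start = v}
  | [], _, _, z, h => ⟨z, h⟩
  | e :: l, v, hv, z, h =>
    let w := appendInfAux l (G.rng e) hv.2 z h
    ⟨consInf G e w.1 w.2, hv.1⟩

/-- Concatenation of a finite path with an infinite path. -/
def FinPath.concatInf {G : Graph} (α : FinPath G) (z : InfPath G)
    (h : z.start = α.rngF) : InfPath G :=
  (appendInfAux G α.edges α.start α.valid z h).1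

/-- The path space `Y ∪ Z` of all finite and infinite paths. -/
def PathSp := FinPath G ⊕ InfPath G

/-- The initial vertex of a (finite or infinite) path. -/
def startOf : PathSp G → G.V
  | .inl α => α.start
  | .inr z => z.start

/-- The length of a path, in `ℕ∞`. -/
def lenOf : PathSp G → ℕ∞
  | .inl α => (α.edges.length : ℕ∞)
  | .inr _ => ⊤

/-- The `i`-th edge (0-indexed) of a path, if it exists. -/
def nthEdge : PathSp G → ℕ → Option G.Ed
  | .inl α, i => α.edges[i]?
  | .inr z, i => some (z.seq i)

/-- `x = αγ` for some (finite or infinite, possibly length `0`) path `γ`;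
that is, `α` is an initial segment of `x`, i.e. `x ∈ D_α`. -/
def Ext (α : FinPath G) (x : PathSp G) : Prop :=
  (∃ (β : FinPath G) (h : β.start = α.rngF), x = .inl (α.concat β h)) ∨
  (∃ (w : InfPath G) (h : w.start = α.rngF), x = .inr (α.concatInf w h))

/-- The basic set `D_α ⊆ Y ∪ Z`. -/
def Dset (α : FinPath G) : Set (PathSp G) := {x | Ext G α x}

/-- The topology on the path space, generated by the sets `D_α` and their complements. -/
def pathTop : TopologicalSpace (PathSp G) :=
  .generateFrom (Set.range (Dset G) ∪ Set.range fun α => (Dset G α)ᶜ)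

/-- The vertex `v` emits infinitely many edges. -/
def Vinf (v : G.V) : Prop := {e | G.src e = v}.Infinite

/-- Membership in `X = Y_∞ ∪ Z`. -/
def memX : PathSp G → Prop
  | .inl α => Vinf G α.rngF
  | .inr _ => True

/-- The set `X = Y_∞ ∪ Z`. -/
def Xset : Set (PathSp G) := {x | memX G x}

/-- Tail equivalence of paths: `x = αγ` and `y = βγ` for finite paths `α, β`
and a common (finite or infinite) path `γ`. -/
def TailEq (x y : PathSp G) : Prop :=
  (∃ (α β γ : FinPath G) (h₁ : γ.start = α.rngF) (h₂ : γ.start = β.rngF),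
      x = .inl (α.concat γ h₁) ∧ y = .inl (β.concat γ h₂)) ∨
  (∃ (α β : FinPath G) (w : InfPath G) (h₁ : w.start = α.rngF)
      (h₂ : w.start = β.rngF),
      x = .inr (α.concatInf w h₁) ∧ y = .inr (β.concatInf w h₂))

/-- A subset of the path space is invariant (a union of tail-equivalence classes). -/
def InvariantS (F : Set (PathSp G)) : Prop :=
  ∀ x ∈ F, ∀ y, TailEq G x y → y ∈ F

/-- Membership `(x, k, y) ∈ G` for the path groupoid: `x = αγ`, `y = βγ` and
`k = l(α) - l(β)`. -/
def InG (x : PathSp G) (k : ℤ) (y : PathSp G) : Prop :=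
  (∃ (α β γ : FinPath G) (h₁ : γ.start = α.rngF) (h₂ : γ.start = β.rngF),
      x = .inl (α.concat γ h₁) ∧ y = .inl (β.concat γ h₂) ∧
        k = (α.len : ℤ) - (β.len : ℤ)) ∨
  (∃ (α β : FinPath G) (w : InfPath G) (h₁ : w.start = α.rngF)
      (h₂ : w.start = β.rngF),
      x = .inr (α.concatInf w h₁) ∧ y = .inr (β.concatInf w h₂) ∧
        k = (α.len : ℤ) - (β.len : ℤ))

/-- There is a finite path from `u` to `w`. -/
def Reach (u w : G.V) : Prop := ∃ β : FinPath G, β.start = u ∧ β.rngF = w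

/-- A loop based at the vertex `v`. -/
def LoopAt (v : G.V) (α : FinPath G) : Prop :=
  α.edges ≠ [] ∧ α.start = v ∧ α.rngF = v ∧
    ∀ i e, i + 1 < α.edges.length → α.edges[i]? = some e → G.rng e ≠ v

/-- Condition (K): no vertex has exactly one loop based at it. -/
def CondK : Prop := ¬ ∃ v : G.V, ∃! α : FinPath G, LoopAt G v α

/-- A point of the path space has trivial isotropy if whenever `x = αγ = βγ`
then `l(α) = l(β)`. -/
def TrivIso (x : PathSp G) : Prop :=
  ∀ α β : FinPath G,
    ((∃ (γ : FinPath G) (h₁ : γ.start = α.rngF) (h₂ : γ.start = β.rngF),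
        x = .inl (α.concat γ h₁) ∧ x = .inl (β.concat γ h₂)) ∨
     (∃ (w : InfPath G) (h₁ : w.start = α.rngF) (h₂ : w.start = β.rngF),
        x = .inr (α.concatInf w h₁) ∧ x = .inr (β.concatInf w h₂))) →
    α.len = β.len


/-- The universal groupoid `H = {z} ∪ {(x,k,y) : x = αγ, y = βγ, k = l(α) − l(β)}`,
with `z` encoded as `none`. -/
def HType := Option {p : PathSp G × ℤ × PathSp G // InG G p.1 p.2.1 p.2.2}

/-- The basic set `A_{α,β} = {(αγ, l(α) − l(β), βγ)} ⊆ H`. -/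
def ASet (α β : FinPath G) : Set (HType G) :=
  {t | ∃ (p : PathSp G × ℤ × PathSp G) (h : InG G p.1 p.2.1 p.2.2),
    t = some ⟨p, h⟩ ∧ p.2.1 = (α.len : ℤ) - (β.len : ℤ) ∧
    ((∃ (γ : FinPath G) (h₁ : γ.start = α.rngF) (h₂ : γ.start = β.rngF),
        p.1 = .inl (α.concat γ h₁) ∧ p.2.2 = .inl (β.concat γ h₂)) ∨
     (∃ (w : InfPath G) (h₁ : w.start = α.rngF) (h₂ : w.start = β.rngF),
        p.1 = .inr (α.concatInf w h₁) ∧ p.2.2 = .inr (β.concatInf w h₂)))}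

/-- The topology on `H` generated by the singleton `{z}`, the sets `A_{α,β}`
(for `α, β ∈ Y` with `r(α) = r(β)`), and their complements. -/
def HTop : TopologicalSpace (HType G) :=
  .generateFrom ({{(none : HType G)}} ∪
    {S | ∃ α β : FinPath G, α.rngF = β.rngF ∧ (S = ASet G α β ∨ S = (ASet G α β)ᶜ)})

/-! ### Auxiliary lemmas for the Hausdorff property -/

section Aux

variable {G}

theorem FinPath.ext' {α β : FinPath G} (hs : α.start = β.start)
    (he : α.edges = β.edges) : α = β := by
  cases α; cases β; cases hs; cases he; rfl

theorem InfPath.ext' {w w' : InfPath G} (h : w.seq = w'.seq) : w = w' := by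
  cases w; cases w'; cases h; rfl

theorem len_concat (α β : FinPath G) (h : β.start = α.rngF) :
    (α.concat β h).len = α.len + β.len :=
  List.length_append

theorem concat_nil (α β : FinPath G) (h : β.start = α.rngF) (hb : β.edges = []) :
    α.concat β h = α :=
  FinPath.ext' rfl (by show α.edges ++ β.edges = α.edges; simp [hb])

theorem appendInfAux_seq (l : List G.Ed) (v : G.V) (hv : Valid G v l) (z : InfPath G)
    (h : z.start = rngTo G v l) (n : ℕ) :
    (appendInfAux G l v hv z h).1.seq n =
      if hn : n < l.length then l.get ⟨n, hn⟩ else z.seq (n - l.length) := by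
  induction l generalizing v n with
  | nil => simp [appendInfAux]
  | cons e l ih =>
    cases n with
    | zero => simp [appendInfAux, consInf]
    | succ m =>
      show (appendInfAux G l (G.rng e) hv.2 z h).1.seq m = _
      refine (ih (G.rng e) hv.2 h m).trans ?_
      by_cases hm : m < l.length
      · rw [dif_pos hm, dif_pos (by simpa using Nat.succ_lt_succ hm)]
        rfl
      · rw [dif_neg hm, dif_neg (by simpa using fun h' => hm (Nat.lt_of_succ_lt_succ h'))]
        simp [Nat.succ_sub_succ]

theorem concatInf_seq (α : FinPath G) (w : InfPath G) (h : w.start = α.rngF) (n : ℕ) :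
    (α.concatInf w h).seq n =
      if hn : n < α.len then α.edges.get ⟨n, hn⟩ else w.seq (n - α.len) :=
  appendInfAux_seq α.edges α.start α.valid w h n

theorem concatInf_start (α : FinPath G) (w : InfPath G) (h : w.start = α.rngF) :
    (α.concatInf w h).start = α.start :=
  (appendInfAux G α.edges α.start α.valid w h).2

theorem concatInf_congr (α : FinPath G) {w w' : InfPath G} (hw : w = w')
    (h : w.start = α.rngF) (h' : w'.start = α.rngF) :
    α.concatInf w h = α.concatInf w' h' := by cases hw; rfl

theorem concatInf_inj {α : FinPath G} {w w' : InfPath G}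
    {h : w.start = α.rngF} {h' : w'.start = α.rngF}
    (he : α.concatInf w h = α.concatInf w' h') : w = w' := by
  apply InfPath.ext'; funext n
  have h1 := concatInf_seq α w h (n + α.len)
  have h2 := concatInf_seq α w' h' (n + α.len)
  rw [he] at h1
  have h3 := h1.symm.trans h2
  rw [dif_neg (Nat.not_lt.mpr (Nat.le_add_left _ _)),
    dif_neg (Nat.not_lt.mpr (Nat.le_add_left _ _)), Nat.add_sub_cancel] at h3
  exact h3

theorem concatInf_assoc (α β : FinPath G) (hb : β.start = α.rngF) (w : InfPath G)
    (hw : w.start = (α.concat β hb).rngF) (hw' : w.start = β.rngF)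
    (h' : (β.concatInf w hw').start = α.rngF) :
    (α.concat β hb).concatInf w hw = α.concatInf (β.concatInf w hw') h' := by
  apply InfPath.ext'; funext n
  rw [concatInf_seq, concatInf_seq]
  have hlen : (α.concat β hb).len = α.len + β.len := len_concat α β hb
  have hedg : (α.concat β hb).edges = α.edges ++ β.edges := rfl
  have hL : α.len = α.edges.length := rfl
  have hLb : β.len = β.edges.length := rfl
  by_cases h1 : n < α.len
  · rw [dif_pos h1, dif_pos (by omega)]
    simp only [List.get_eq_getElem, hedg]
    exact List.getElem_append_left h1
  · rw [dif_neg h1, concatInf_seq]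
    by_cases h2 : n < α.len + β.len
    · rw [dif_pos (by omega), dif_pos (show n - α.len < β.len by omega)]
      simp only [List.get_eq_getElem, hedg]
      rw [List.getElem_append_right (by omega)]
      simp only [FinPath.len]
    · rw [dif_neg (by omega), dif_neg (show ¬ n - α.len < β.len by omega)]
      congr 1
      omega

/-- The tail of an infinite path. -/
def tailInf (w : InfPath G) : InfPath G :=
  ⟨fun n => w.seq (n + 1), fun i => w.valid (i + 1)⟩

theorem tailInf_start (w : InfPath G) : (tailInf w).start = G.rng (w.seq 0) :=
  w.valid 0

theorem ep_concatInf (w : InfPath G)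
    (h : (tailInf w).start = (FinPath.ep (w.seq 0)).rngF) :
    (FinPath.ep (w.seq 0)).concatInf (tailInf w) h = w := by
  apply InfPath.ext'; funext n
  rw [concatInf_seq]
  cases n with
  | zero => rfl
  | succ m =>
    rw [dif_neg (by simp [FinPath.ep, FinPath.len])]
    rfl

/-- The first `n` edges of an infinite path, as a list. -/
def takeInf (w : InfPath G) (n : ℕ) : List G.Ed := (List.range n).map w.seq

/-- The infinite path obtained by dropping the first `n` edges. -/
def dropInf (w : InfPath G) (n : ℕ) : InfPath G :=
  ⟨fun i => w.seq (n + i), fun i => w.valid (n + i)⟩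

theorem takeInf_length (w : InfPath G) (n : ℕ) : (takeInf w n).length = n := by
  simp [takeInf]

theorem rngTo_takeInf (w : InfPath G) (n : ℕ) :
    rngTo G w.start (takeInf w n) = (dropInf w n).start := by
  induction n with
  | zero => rfl
  | succ m ih =>
    have h : takeInf w (m + 1) = takeInf w m ++ [w.seq m] := by
      simp [takeInf, List.range_succ]
    rw [h, rngTo_append, ih]
    show G.rng (w.seq m) = G.src (w.seq (m + 1))
    exact (w.valid m).symm

theorem valid_takeInf (w : InfPath G) (n : ℕ) : Valid G w.start (takeInf w n) := by
  induction n with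
  | zero => trivial
  | succ m ih =>
    have h : takeInf w (m + 1) = takeInf w m ++ [w.seq m] := by
      simp [takeInf, List.range_succ]
    rw [h, valid_append, rngTo_takeInf]
    exact ⟨ih, rfl, trivial⟩

/-- The prefix of an infinite path of length `n`, as a finite path. -/
def prefixInf (w : InfPath G) (n : ℕ) : FinPath G :=
  ⟨w.start, takeInf w n, valid_takeInf w n⟩

theorem prefixInf_len (w : InfPath G) (n : ℕ) : (prefixInf w n).len = n :=
  takeInf_length w n

theorem prefixInf_rngF (w : InfPath G) (n : ℕ) :
    (prefixInf w n).rngF = (dropInf w n).start :=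
  rngTo_takeInf w n

theorem prefixInf_concatInf (w : InfPath G) (n : ℕ)
    (h : (dropInf w n).start = (prefixInf w n).rngF) :
    (prefixInf w n).concatInf (dropInf w n) h = w := by
  apply InfPath.ext'; funext i
  rw [concatInf_seq]
  by_cases hi : i < (prefixInf w n).len
  · rw [dif_pos hi]
    simp [prefixInf, takeInf, FinPath.len]
  · rw [dif_neg hi]
    rw [prefixInf_len] at hi
    show w.seq (n + (i - (prefixInf w n).len)) = w.seq i
    rw [prefixInf_len]
    congr 1
    omega

/-- Membership condition for a triple in the basic set `A_{α,β}`. -/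
def Mem3 (A B : FinPath G) (p : PathSp G × ℤ × PathSp G) : Prop :=
  p.2.1 = (A.len : ℤ) - (B.len : ℤ) ∧
  ((∃ (γ : FinPath G) (h₁ : γ.start = A.rngF) (h₂ : γ.start = B.rngF),
      p.1 = .inl (A.concat γ h₁) ∧ p.2.2 = .inl (B.concat γ h₂)) ∨
   (∃ (w : InfPath G) (h₁ : w.start = A.rngF) (h₂ : w.start = B.rngF),
      p.1 = .inr (A.concatInf w h₁) ∧ p.2.2 = .inr (B.concatInf w h₂)))

theorem mem_ASet_iff {A B : FinPath G} {p : PathSp G × ℤ × PathSp G}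
    {hp : InG G p.1 p.2.1 p.2.2} :
    (some ⟨p, hp⟩ : HType G) ∈ ASet G A B ↔ Mem3 A B p := by
  constructor
  · rintro ⟨p', hp', heq, hk, hd⟩
    obtain rfl : p = p' := congrArg Subtype.val (Option.some.inj heq)
    exact ⟨hk, hd⟩
  · rintro ⟨hk, hd⟩
    exact ⟨p, hp, rfl, hk, hd⟩

theorem mem3_fin {α β γ : FinPath G} (h₁ : γ.start = α.rngF) (h₂ : γ.start = β.rngF) :
    Mem3 (α.concat γ h₁) (β.concat γ h₂)
      ((.inl (α.concat γ h₁) : PathSp G), ((α.len : ℤ) - (β.len : ℤ),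
        (.inl (β.concat γ h₂) : PathSp G))) := by
  constructor
  · show (α.len : ℤ) - (β.len : ℤ) = _
    rw [len_concat α γ h₁, len_concat β γ h₂]
    push_cast; ring
  · refine Or.inl ⟨FinPath.vp γ.rngF, (FinPath.rngF_concat α γ h₁).symm,
      (FinPath.rngF_concat β γ h₂).symm, ?_, ?_⟩
    · show (Sum.inl (α.concat γ h₁) : PathSp G) = _
      rw [concat_nil (α.concat γ h₁) (FinPath.vp γ.rngF)
        ((FinPath.rngF_concat α γ h₁).symm) rfl]
    · show (Sum.inl (β.concat γ h₂) : PathSp G) = _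
      rw [concat_nil (β.concat γ h₂) (FinPath.vp γ.rngF)
        ((FinPath.rngF_concat β γ h₂).symm) rfl]

theorem mem3_inf {α β : FinPath G} {w : InfPath G}
    (h₁ : w.start = α.rngF) (h₂ : w.start = β.rngF) :
    Mem3 α β ((.inr (α.concatInf w h₁) : PathSp G), ((α.len : ℤ) - (β.len : ℤ),
      (.inr (β.concatInf w h₂) : PathSp G))) :=
  ⟨rfl, Or.inr ⟨w, h₁, h₂, rfl, rfl⟩⟩

/-- Separation lemma when the first point has a finite decomposition. -/
theorem sepF {α β γ : FinPath G} (h₁ : γ.start = α.rngF) (h₂ : γ.start = β.rngF)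
    {p q : PathSp G × ℤ × PathSp G}
    (hp : p = ((.inl (α.concat γ h₁) : PathSp G), ((α.len : ℤ) - (β.len : ℤ),
      (.inl (β.concat γ h₂) : PathSp G))))
    (hne : p ≠ q) :
    ∃ A B : FinPath G, A.rngF = B.rngF ∧
      ((Mem3 A B p ∧ ¬ Mem3 A B q) ∨ (Mem3 A B q ∧ ¬ Mem3 A B p)) := by
  subst hp
  set α₁ := α.concat γ h₁ with hα₁
  set β₁ := β.concat γ h₂ with hβ₁
  have hr : α₁.rngF = β₁.rngF := by
    rw [hα₁, hβ₁, FinPath.rngF_concat α γ h₁, FinPath.rngF_concat β γ h₂]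
  have hp1 := mem3_fin h₁ h₂
  by_cases hq1 : Mem3 α₁ β₁ q
  · obtain ⟨hk, hd⟩ := hq1
    rcases hd with ⟨γ', hg₁, hg₂, hx, hy⟩ | ⟨w, hw₁, hw₂, hx, hy⟩
    · -- q is a finite extension
      refine ⟨α₁.concat γ' hg₁, β₁.concat γ' hg₂,
        by rw [FinPath.rngF_concat α₁ γ' hg₁, FinPath.rngF_concat β₁ γ' hg₂],
        Or.inr ⟨⟨?_, ?_⟩, ?_⟩⟩
      · rw [hk, len_concat α₁ γ' hg₁, len_concat β₁ γ' hg₂]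
        push_cast; ring
      · refine Or.inl ⟨FinPath.vp γ'.rngF, (FinPath.rngF_concat α₁ γ' hg₁).symm,
          (FinPath.rngF_concat β₁ γ' hg₂).symm, ?_, ?_⟩
        · rw [concat_nil (α₁.concat γ' hg₁) (FinPath.vp γ'.rngF)
            ((FinPath.rngF_concat α₁ γ' hg₁).symm) rfl]
          exact hx
        · rw [concat_nil (β₁.concat γ' hg₂) (FinPath.vp γ'.rngF)
            ((FinPath.rngF_concat β₁ γ' hg₂).symm) rfl]
          exact hy
      · rintro ⟨hk', hd'⟩
        rcases hd' with ⟨δ, hd₁, hd₂, hx', hy'⟩ | ⟨w, _, _, hx', _⟩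
        · have hEq : α₁ = (α₁.concat γ' hg₁).concat δ hd₁ := Sum.inl.inj hx'
          have hlen : α₁.len = (α₁.len + γ'.len) + δ.len := by
            have h5 := congrArg FinPath.len hEq
            rwa [len_concat (α₁.concat γ' hg₁) δ hd₁, len_concat α₁ γ' hg₁] at h5
          have h0 : γ'.len = 0 := by omega
          have hγ0 : γ'.edges = [] := by
            simp only [FinPath.len] at h0
            exact List.length_eq_zero_iff.mp h0
          apply hne
          have e1 : q.1 = Sum.inl α₁ := by rw [hx, concat_nil α₁ γ' hg₁ hγ0]
          have e3 : q.2.2 = Sum.inl β₁ := by rw [hy, concat_nil β₁ γ' hg₂ hγ0]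
          have hk2 : q.2.1 = (α.len : ℤ) - β.len := by
            rw [hk, hα₁, hβ₁, len_concat α γ h₁, len_concat β γ h₂]
            push_cast; ring
          exact (Prod.ext e1 (Prod.ext hk2 e3)).symm
        · exact absurd hx' (by simp)
    · -- q is an infinite extension: extend by one edge
      have hse : (FinPath.ep (w.seq 0)).start = α₁.rngF := hw₁
      have hse' : (FinPath.ep (w.seq 0)).start = β₁.rngF := hw₂
      have hts : (tailInf w).start = (FinPath.ep (w.seq 0)).rngF := tailInf_start w
      have hts₁ : (tailInf w).start = (α₁.concat (FinPath.ep (w.seq 0)) hse).rngF :=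
        hts.trans (FinPath.rngF_concat α₁ _ hse).symm
      have hts₂ : (tailInf w).start = (β₁.concat (FinPath.ep (w.seq 0)) hse').rngF :=
        hts.trans (FinPath.rngF_concat β₁ _ hse').symm
      refine ⟨α₁.concat (FinPath.ep (w.seq 0)) hse, β₁.concat (FinPath.ep (w.seq 0)) hse',
        by rw [FinPath.rngF_concat α₁ _ hse, FinPath.rngF_concat β₁ _ hse'],
        Or.inr ⟨⟨?_, ?_⟩, ?_⟩⟩
      · rw [hk, len_concat α₁ _ hse, len_concat β₁ _ hse']
        push_cast; ring
      · refine Or.inr ⟨tailInf w, hts₁, hts₂, ?_, ?_⟩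
        · rw [hx]
          congr 1
          have h3 : ((FinPath.ep (w.seq 0)).concatInf (tailInf w) hts).start = α₁.rngF :=
            (concatInf_start _ _ hts).trans hw₁
          exact ((concatInf_assoc α₁ _ hse (tailInf w) hts₁ hts h3).trans
            (concatInf_congr α₁ (ep_concatInf w hts) h3 hw₁)).symm
        · rw [hy]
          congr 1
          have h3 : ((FinPath.ep (w.seq 0)).concatInf (tailInf w) hts).start = β₁.rngF :=
            (concatInf_start _ _ hts).trans hw₂
          exact ((concatInf_assoc β₁ _ hse' (tailInf w) hts₂ hts h3).trans
            (concatInf_congr β₁ (ep_concatInf w hts) h3 hw₂)).symm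
      · rintro ⟨hk', hd'⟩
        rcases hd' with ⟨δ, hd₁, hd₂, hx', hy'⟩ | ⟨w', _, _, hx', _⟩
        · have hEq : α₁ = (α₁.concat (FinPath.ep (w.seq 0)) hse).concat δ hd₁ :=
            Sum.inl.inj hx'
          have hlen : α₁.len = (α₁.len + (FinPath.ep (w.seq 0)).len) + δ.len := by
            have h5 := congrArg FinPath.len hEq
            rwa [len_concat (α₁.concat (FinPath.ep (w.seq 0)) hse) δ hd₁,
              len_concat α₁ _ hse] at h5
          have h1 : (FinPath.ep (w.seq 0)).len = 1 := rfl
          omega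
        · exact absurd hx' (by simp)
  · exact ⟨α₁, β₁, hr, Or.inl ⟨hp1, hq1⟩⟩

/-- Separation lemma when the first point has an infinite decomposition. -/
theorem sepI {α β : FinPath G} {w : InfPath G}
    (h₁ : w.start = α.rngF) (h₂ : w.start = β.rngF)
    {p q : PathSp G × ℤ × PathSp G}
    (hp : p = ((.inr (α.concatInf w h₁) : PathSp G), ((α.len : ℤ) - (β.len : ℤ),
      (.inr (β.concatInf w h₂) : PathSp G))))
    (hne : p ≠ q) :
    ∃ A B : FinPath G, A.rngF = B.rngF ∧
      ((Mem3 A B p ∧ ¬ Mem3 A B q) ∨ (Mem3 A B q ∧ ¬ Mem3 A B p)) := by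
  subst hp
  have hr : α.rngF = β.rngF := h₁.symm.trans h₂
  have hp1 := mem3_inf h₁ h₂
  by_cases hq1 : Mem3 α β q
  · obtain ⟨hk, hd⟩ := hq1
    rcases hd with ⟨γ', hg₁, hg₂, hx, hy⟩ | ⟨w', hw₁, hw₂, hx, hy⟩
    · -- q is finite: apply sepF to q and flip
      have hq' : q = ((.inl (α.concat γ' hg₁) : PathSp G), ((α.len : ℤ) - (β.len : ℤ),
          (.inl (β.concat γ' hg₂) : PathSp G))) :=
        Prod.ext hx (Prod.ext hk hy)
      obtain ⟨A, B, hAB, hor⟩ := sepF hg₁ hg₂ hq' (Ne.symm hne)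
      exact ⟨A, B, hAB, hor.symm⟩
    · -- q is infinite with the same α, β; find a differing edge
      have hww : w ≠ w' := by
        intro hEq2
        apply hne
        exact Prod.ext ((congrArg Sum.inr (concatInf_congr α hEq2 h₁ hw₁)).trans hx.symm)
          (Prod.ext hk.symm
            ((congrArg Sum.inr (concatInf_congr β hEq2 h₂ hw₂)).trans hy.symm))
      obtain ⟨n, hn⟩ : ∃ n, w.seq n ≠ w'.seq n := by
        by_contra hc
        push_neg at hc
        exact hww (InfPath.ext' (funext hc))
      set δ := prefixInf w (n + 1) with hδ
      have hδs : δ.start = α.rngF := h₁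
      have hδs' : δ.start = β.rngF := h₂
      have hdw : (dropInf w (n + 1)).start = δ.rngF := (prefixInf_rngF w (n + 1)).symm
      have hd₁ : (dropInf w (n + 1)).start = (α.concat δ hδs).rngF :=
        hdw.trans (FinPath.rngF_concat α δ hδs).symm
      have hd₂ : (dropInf w (n + 1)).start = (β.concat δ hδs').rngF :=
        hdw.trans (FinPath.rngF_concat β δ hδs').symm
      refine ⟨α.concat δ hδs, β.concat δ hδs',
        by rw [FinPath.rngF_concat α δ hδs, FinPath.rngF_concat β δ hδs'],
        Or.inl ⟨⟨?_, ?_⟩, ?_⟩⟩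
      · rw [len_concat α δ hδs, len_concat β δ hδs']
        push_cast; ring
      · refine Or.inr ⟨dropInf w (n + 1), hd₁, hd₂, ?_, ?_⟩
        · show Sum.inr (α.concatInf w h₁) = _
          congr 1
          have h3 : (δ.concatInf (dropInf w (n + 1)) hdw).start = α.rngF :=
            (concatInf_start δ _ hdw).trans h₁
          exact ((concatInf_assoc α δ hδs (dropInf w (n + 1)) hd₁ hdw h3).trans
            (concatInf_congr α (prefixInf_concatInf w (n + 1) hdw) h3 h₁)).symm
        · show Sum.inr (β.concatInf w h₂) = _
          congr 1
          have h3 : (δ.concatInf (dropInf w (n + 1)) hdw).start = β.rngF :=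
            (concatInf_start δ _ hdw).trans h₂
          exact ((concatInf_assoc β δ hδs' (dropInf w (n + 1)) hd₂ hdw h3).trans
            (concatInf_congr β (prefixInf_concatInf w (n + 1) hdw) h3 h₂)).symm
      · rintro ⟨hk', hd'⟩
        rcases hd' with ⟨δ', _, _, hx', _⟩ | ⟨u, hu₁, hu₂, hx', hy'⟩
        · rw [hx] at hx'
          exact absurd hx' (by simp)
        · rw [hx] at hx'
          have hEq : α.concatInf w' hw₁ = (α.concat δ hδs).concatInf u hu₁ :=
            Sum.inr.inj hx'
          have hu' : u.start = δ.rngF := hu₁.trans (FinPath.rngF_concat α δ hδs)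
          have h3 : (δ.concatInf u hu').start = α.rngF :=
            (concatInf_start δ u hu').trans h₁
          rw [concatInf_assoc α δ hδs u hu₁ hu' h3] at hEq
          have hw'' : w' = δ.concatInf u hu' := concatInf_inj hEq
          apply hn
          have hseq := concatInf_seq δ u hu' n
          rw [dif_pos (show n < δ.len by rw [hδ, prefixInf_len]; omega)] at hseq
          rw [hw'', hseq]
          simp [hδ, prefixInf, takeInf, FinPath.len]
  · exact ⟨α, β, hr, Or.inl ⟨hp1, hq1⟩⟩

theorem exists_mem3 (p : PathSp G × ℤ × PathSp G) (hp : InG G p.1 p.2.1 p.2.2) :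
    ∃ A B : FinPath G, A.rngF = B.rngF ∧ Mem3 A B p := by
  rcases hp with ⟨α, β, γ, h₁, h₂, hx, hy, hk⟩ | ⟨α, β, w, h₁, h₂, hx, hy, hk⟩
  · refine ⟨α.concat γ h₁, β.concat γ h₂,
      by rw [FinPath.rngF_concat, FinPath.rngF_concat], ?_⟩
    have hp' : p = ((.inl (α.concat γ h₁) : PathSp G), ((α.len : ℤ) - (β.len : ℤ),
        (.inl (β.concat γ h₂) : PathSp G))) :=
      Prod.ext hx (Prod.ext hk hy)
    rw [hp']
    exact mem3_fin h₁ h₂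
  · refine ⟨α, β, h₁.symm.trans h₂, ?_⟩
    have hp' : p = ((.inr (α.concatInf w h₁) : PathSp G), ((α.len : ℤ) - (β.len : ℤ),
        (.inr (β.concatInf w h₂) : PathSp G))) :=
      Prod.ext hx (Prod.ext hk hy)
    rw [hp']
    exact mem3_inf h₁ h₂

end Aux

/-- The space `H`, equipped with the topology generated by `{z}`,
the sets `A_{α,β}`, and their complements, is Hausdorff. -/
theorem HType_t2 (G : Graph) [Countable G.V] [Countable G.Ed] :
    @T2Space (HType G) (HTop G) := by
  letI : TopologicalSpace (HType G) := HTop G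
  have hopenA : ∀ A B : FinPath G, A.rngF = B.rngF → IsOpen (ASet G A B) := fun A B h =>
    TopologicalSpace.GenerateOpen.basic _ (Or.inr ⟨A, B, h, Or.inl rfl⟩)
  have hopenAc : ∀ A B : FinPath G, A.rngF = B.rngF → IsOpen (ASet G A B)ᶜ := fun A B h =>
    TopologicalSpace.GenerateOpen.basic _ (Or.inr ⟨A, B, h, Or.inr rfl⟩)
  have hopenN : IsOpen ({none} : Set (HType G)) :=
    TopologicalSpace.GenerateOpen.basic _ (Or.inl rfl)
  have hopenNc : IsOpen (({none} : Set (HType G))ᶜ) := by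
    have hEq : (({none} : Set (HType G))ᶜ) =
        ⋃₀ {S | ∃ A B : FinPath G, A.rngF = B.rngF ∧ S = ASet G A B} := by
      ext t
      simp only [Set.mem_compl_iff, Set.mem_singleton_iff, Set.mem_sUnion, Set.mem_setOf_eq]
      constructor
      · intro ht
        match t, ht with
        | some ⟨p, hp⟩, _ =>
          obtain ⟨A, B, hAB, hm⟩ := exists_mem3 p hp
          exact ⟨ASet G A B, ⟨A, B, hAB, rfl⟩, mem_ASet_iff.mpr hm⟩
      · rintro ⟨S, ⟨A, B, hAB, rfl⟩, ht⟩ rfl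
        obtain ⟨p, h, heq, -⟩ := ht
        cases heq
    rw [hEq]
    exact isOpen_sUnion fun S hS => by
      obtain ⟨A, B, hAB, rfl⟩ := hS
      exact hopenA A B hAB
  constructor
  intro a b hab
  match a, b with
  | none, none => exact absurd rfl hab
  | none, some ⟨p, hp⟩ =>
    exact ⟨{none}, {none}ᶜ, hopenN, hopenNc, rfl, fun h => Option.some_ne_none _ h, disjoint_compl_right⟩
  | some ⟨p, hp⟩, none =>
    exact ⟨{none}ᶜ, {none}, hopenNc, hopenN, fun h => Option.some_ne_none _ h, rfl, disjoint_compl_left⟩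
  | some ⟨p, hp⟩, some ⟨q, hq⟩ =>
    have hpq : p ≠ q := by
      rintro rfl
      exact hab rfl
    have hsep : ∃ A B : FinPath G, A.rngF = B.rngF ∧
        ((Mem3 A B p ∧ ¬ Mem3 A B q) ∨ (Mem3 A B q ∧ ¬ Mem3 A B p)) := by
      rcases hp with ⟨α, β, γ, h₁, h₂, hx, hy, hk⟩ | ⟨α, β, w, h₁, h₂, hx, hy, hk⟩
      · exact sepF h₁ h₂ (Prod.ext hx (Prod.ext hk hy)) hpq
      · exact sepI h₁ h₂ (Prod.ext hx (Prod.ext hk hy)) hpq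
    obtain ⟨A, B, hAB, hor⟩ := hsep
    rcases hor with ⟨hpa, hqa⟩ | ⟨hqa, hpa⟩
    · exact ⟨ASet G A B, (ASet G A B)ᶜ, hopenA A B hAB, hopenAc A B hAB,
        mem_ASet_iff.mpr hpa, fun h => hqa (mem_ASet_iff.mp h), disjoint_compl_right⟩
    · exact ⟨(ASet G A B)ᶜ, ASet G A B, hopenAc A B hAB, hopenA A B hAB,
        fun h => hpa (mem_ASet_iff.mp h), mem_ASet_iff.mpr hqa, disjoint_compl_left⟩

end GraphCstar
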